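/- arXiv:1305.0481 — 2 statements merged into one kernel-verified Lean document; each statement's English description precedes it below -/
import Mathlib

section
/- Let γ_d ⊂ ∂ω have positive H¹-measure with ∫_{γ_d} x' dH¹ = 0 and ∫_{γ_d}|x'|² dH¹ = c > 0. If Q̂^ε ∈ SO(2) and b^ε ∈ ℝ² satisfy |(Q̂^ε − Id)x' + b^ε| ≤ Cε^{α−2} for H¹-a.e. x' ∈ γ_d, then |Q̂^ε − Id| ≤ C' ε^{α−2} for a constant C' depending only on γ_d and C. -/
open Matrix MeasureTheory

attribute [local instance]
  Matrix.frobeniusNormedAddCommGroup Matrix.frobeniusNormedSpace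

lemma key (Q : Matrix (Fin 2) (Fin 2) ℝ) (hQ : Qᵀ * Q = 1) (hd : Q.det = 1)
    (x : EuclideanSpace ℝ (Fin 2)) :
    2 * ‖Matrix.toEuclideanLin (Q - 1) x‖ ^ 2 = ‖Q - 1‖ ^ 2 * ‖x‖ ^ 2 := by
  have h00 := congrFun (congrFun hQ 0) 0
  have h01 := congrFun (congrFun hQ 0) 1
  have h11 := congrFun (congrFun hQ 1) 1
  simp [Matrix.mul_apply, Fin.sum_univ_two, Matrix.one_apply] at h00 h01 h11
  rw [Matrix.det_fin_two] at hd
  set a := Q 0 0; set b' := Q 0 1; set c := Q 1 0; set d := Q 1 1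
  have hda : d = a := by linear_combination a*hd + c*h01 - d*h00
  have hcb : c = -b' := by linear_combination d*h01 - b'*hd - c*h11
  have hnv : ∀ v : EuclideanSpace ℝ (Fin 2), ‖v‖ ^ 2 = v 0 ^ 2 + v 1 ^ 2 := by
    intro v
    rw [EuclideanSpace.norm_eq, Real.sq_sqrt (by positivity)]
    simp [Fin.sum_univ_two, sq_abs]
  have hQn : ‖Q - 1‖ ^ 2 = (a-1)^2 + b'^2 + c^2 + (d-1)^2 := by
    rw [Matrix.frobenius_norm_def, ← Real.rpow_natCast _ 2, ← Real.rpow_mul (by positivity)]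
    norm_num
    ring
  rw [hnv, hnv x, hQn]
  have hv0 : (Matrix.toEuclideanLin (Q - 1) x) 0 = (a-1) * x 0 + b' * x 1 := by
    simp [Matrix.toEuclideanLin_apply, Matrix.mulVec, dotProduct, Fin.sum_univ_two,
      Matrix.sub_apply, Matrix.one_apply]
    ring
  have hv1 : (Matrix.toEuclideanLin (Q - 1) x) 1 = c * x 0 + (d-1) * x 1 := by
    simp [Matrix.toEuclideanLin_apply, Matrix.mulVec, dotProduct, Fin.sum_univ_two,
      Matrix.sub_apply, Matrix.one_apply]
    ring
  rw [hv0, hv1, hda, hcb]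
  ring

/-- on a normalized boundary portion `γ_d` of positive `H¹`-measure, an a.e.
bound `|(Q̂^ε − Id)x' + b^ε| ≤ Cε^{α−2}` for `Q̂^ε ∈ SO(2)` forces
`|Q̂^ε − Id| ≤ C'ε^{α−2}` with `C'` depending only on `γ_d` and `C`. -/
theorem stmt10
    (γd : Set (EuclideanSpace ℝ (Fin 2)))
    (μ : Measure (EuclideanSpace ℝ (Fin 2)))
    (hμ : μ = (MeasureTheory.Measure.hausdorffMeasure 1).restrict γd)
    (hpos : 0 < μ γd) (hfin : μ γd < ⊤)
    (hmean : (∫ x, x ∂μ) = 0)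
    (c : ℝ) (hc : 0 < c) (hsq : (∫ x, ‖x‖ ^ 2 ∂μ) = c)
    (C : ℝ) :
    ∃ C' > (0:ℝ), ∀ (α : ℝ), 3 ≤ α → ∀ (ε : ℝ), 0 < ε →
      ∀ (Q : Matrix (Fin 2) (Fin 2) ℝ) (b : EuclideanSpace ℝ (Fin 2)),
        Qᵀ * Q = 1 → Q.det = 1 →
        (∀ᵐ x ∂μ, ‖Matrix.toEuclideanLin (Q - 1) x + b‖ ≤ C * ε ^ (α - 2)) →
        ‖Q - 1‖ ≤ C' * ε ^ (α - 2) := by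
  have huniv : μ Set.univ = μ γd := by
    rw [hμ, Measure.restrict_apply_univ, Measure.restrict_apply_self]
  have hμfin : IsFiniteMeasure μ := ⟨by rw [huniv]; exact hfin⟩
  set m := (μ γd).toReal with hm
  have hm0 : 0 < m := ENNReal.toReal_pos hpos.ne' hfin.ne
  refine ⟨Real.sqrt (2 * m / c) * |C| + 1, by positivity, ?_⟩
  intro α hα ε hε Q b hQ hdet hae
  have hεp : 0 < ε ^ (α - 2) := Real.rpow_pos_of_pos hε _
  set R := C * ε ^ (α - 2) with hR
  -- integrability of ‖x‖²
  have hsqInt : Integrable (fun x : EuclideanSpace ℝ (Fin 2) => ‖x‖ ^ 2) μ := by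
    by_contra h
    rw [integral_undef h] at hsq
    exact hc.ne hsq
  have hxInt : Integrable (fun x : EuclideanSpace ℝ (Fin 2) => x) μ := by
    have h1 : Integrable (fun x : EuclideanSpace ℝ (Fin 2) => 1 + ‖x‖ ^ 2) μ := (integrable_const 1).add hsqInt
    refine h1.mono' aestronglyMeasurable_id (Filter.Eventually.of_forall fun x => ?_)
    have : ‖x‖ ≤ 1 + ‖x‖ ^ 2 := by nlinarith [sq_nonneg (‖x‖ - 1), norm_nonneg x]
    simpa using this
  set A : EuclideanSpace ℝ (Fin 2) →L[ℝ] EuclideanSpace ℝ (Fin 2) := LinearMap.toContinuousLinearMap (Matrix.toEuclideanLin (Q - 1)) with hA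
  have hAapp : ∀ x : EuclideanSpace ℝ (Fin 2), A x = Matrix.toEuclideanLin (Q - 1) x := fun _ => rfl
  have hAx : Integrable (fun x : EuclideanSpace ℝ (Fin 2) => A x) μ := A.integrable_comp hxInt
  have hAsq_eq : (fun x : EuclideanSpace ℝ (Fin 2) => ‖A x‖ ^ 2) = fun x : EuclideanSpace ℝ (Fin 2) => ‖Q - 1‖ ^ 2 / 2 * ‖x‖ ^ 2 := by
    funext x
    have := key Q hQ hdet x
    rw [hAapp]; linarith
  have hAsq : Integrable (fun x : EuclideanSpace ℝ (Fin 2) => ‖A x‖ ^ 2) μ := by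
    rw [hAsq_eq]; exact hsqInt.const_mul _
  have hcross : Integrable (fun x : EuclideanSpace ℝ (Fin 2) => (inner ℝ b (A x) : ℝ)) μ :=
    ((innerSL ℝ b).comp A).integrable_comp hxInt
  have hexp : (fun x : EuclideanSpace ℝ (Fin 2) => ‖A x + b‖ ^ 2)
      = fun x : EuclideanSpace ℝ (Fin 2) => (‖A x‖ ^ 2 + 2 * (inner ℝ b (A x) : ℝ)) + ‖b‖ ^ 2 := by
    funext x
    rw [norm_add_sq_real, real_inner_comm]
  have hcross2 : Integrable (fun x : EuclideanSpace ℝ (Fin 2) => 2 * (inner ℝ b (A x) : ℝ)) μ :=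
    hcross.const_mul 2
  have h12 : Integrable (fun x : EuclideanSpace ℝ (Fin 2) => ‖A x‖ ^ 2 + 2 * (inner ℝ b (A x) : ℝ)) μ :=
    hAsq.add hcross2
  have hsum : Integrable (fun x : EuclideanSpace ℝ (Fin 2) => ‖A x + b‖ ^ 2) μ := by
    rw [hexp]
    exact h12.add (integrable_const _)
  -- upper bound on the integral
  have hbound : ∫ x, ‖A x + b‖ ^ 2 ∂μ ≤ R ^ 2 * m := by
    have hmono := integral_mono_ae hsum (integrable_const (R ^ 2))
      (hae.mono fun x hx => by
        have h0 : (0:ℝ) ≤ ‖Matrix.toEuclideanLin (Q - 1) x + b‖ := norm_nonneg _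
        show ‖A x + b‖ ^ 2 ≤ R ^ 2
        rw [hAapp]
        nlinarith)
    rwa [integral_const, measureReal_def, huniv, smul_eq_mul, mul_comm] at hmono
  -- compute the integral
  have hAint0 : ∫ x, A x ∂μ = 0 := by
    rw [ContinuousLinearMap.integral_comp_comm A hxInt, hmean, map_zero]
  have hcross0 : ∫ x, (inner ℝ b (A x) : ℝ) ∂μ = 0 := by
    rw [integral_inner hAx b, hAint0, inner_zero_right]
  have hsplit : ∫ x, ‖A x + b‖ ^ 2 ∂μ = ‖Q - 1‖ ^ 2 / 2 * c + ‖b‖ ^ 2 * m := by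
    rw [hexp, integral_add h12 (integrable_const _),
      integral_add hAsq hcross2, integral_const_mul, hcross0, hAsq_eq,
      integral_const_mul, hsq, integral_const, measureReal_def, huniv, smul_eq_mul]
    ring
  have hkey : ‖Q - 1‖ ^ 2 * c ≤ 2 * R ^ 2 * m := by
    have hb2 : 0 ≤ ‖b‖ ^ 2 * m := by positivity
    rw [hsplit] at hbound
    linarith
  -- conclude
  set S := Real.sqrt (2 * m / c) * |C| * ε ^ (α - 2) with hS
  have hS0 : 0 ≤ S := by positivity
  have hSsq : ‖Q - 1‖ ^ 2 ≤ S ^ 2 := by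
    have hs : Real.sqrt (2 * m / c) ^ 2 = 2 * m / c := Real.sq_sqrt (by positivity)
    have : S ^ 2 = 2 * m / c * (C ^ 2 * (ε ^ (α - 2)) ^ 2) := by
      rw [hS]; rw [mul_pow, mul_pow, hs, sq_abs]; ring
    rw [this]
    rw [div_mul_eq_mul_div, le_div_iff₀ hc]
    calc ‖Q - 1‖ ^ 2 * c ≤ 2 * R ^ 2 * m := hkey
      _ = 2 * m * (C ^ 2 * (ε ^ (α - 2)) ^ 2) := by rw [hR]; ring
  have hle : ‖Q - 1‖ ≤ S := by
    have := Real.sqrt_le_sqrt hSsq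
    rwa [Real.sqrt_sq (norm_nonneg _), Real.sqrt_sq hS0] at this
  calc ‖Q - 1‖ ≤ S := hle
    _ ≤ (Real.sqrt (2 * m / c) * |C| + 1) * ε ^ (α - 2) := by
        rw [hS]; nlinarith
end

section
/- Let R̂ ∈ SO(3) satisfy |(R̂ − Id)e₃| ≤ δ. Then |(R̂ − Id)ᵀ e₃| ≤ Cδ and there exists Q̂ ∈ SO(2) such that the top-left 2×2 block of R̂ satisfies |R̂' − Q̂| ≤ Cδ, where C is a universal constant (for δ sufficiently small). -/
open Matrix

attribute [local instance]
  Matrix.frobeniusNormedAddCommGroup Matrix.frobeniusNormedSpace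

/-- Euclidean norm of a vector in `ℝ³`. -/
noncomputable def enorm3 (v : Fin 3 → ℝ) : ℝ := Real.sqrt (∑ i, (v i) ^ 2)

/-- The third coordinate vector `e₃`. -/
def e₃ : Fin 3 → ℝ := fun i => if i = 2 then 1 else 0

private lemma so2_mem (a b s : ℝ) (hs : s ≠ 0) (h : a^2 + b^2 = s^2) :
    (!![a/s, -(b/s); b/s, a/s])ᵀ * !![a/s, -(b/s); b/s, a/s] = 1 := by
  have ht : (!![a/s, -(b/s); b/s, a/s])ᵀ = !![a/s, b/s; -(b/s), a/s] := by
    ext x y; fin_cases x <;> fin_cases y <;> simp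
  rw [ht, Matrix.mul_fin_two, Matrix.one_fin_two]
  have h1 : a/s * (a/s) + b/s * (b/s) = 1 := by field_simp; linarith
  have h2 : a/s * -(b/s) + b/s * (a/s) = 0 := by ring
  have h3 : -(b/s) * (a/s) + a/s * (b/s) = 0 := by ring
  have h4 : -(b/s) * -(b/s) + a/s * (a/s) = 1 := by field_simp; linarith
  rw [h1, h2, h3, h4]

private lemma so2_det (a b s : ℝ) (hs : s ≠ 0) (h : a^2 + b^2 = s^2) :
    (!![a/s, -(b/s); b/s, a/s]).det = 1 := by
  rw [Matrix.det_fin_two_of]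
  field_simp
  linarith

set_option maxHeartbeats 1000000 in
private lemma det_sign_lemma (a b c d e f g h i δ : ℝ)
    (c1 : a^2 + d^2 + g^2 = 1) (c12 : a*b + d*e + g*h = 0)
    (c2 : b^2 + e^2 + h^2 = 1) (r3 : g^2 + h^2 + i^2 = 1)
    (hdet3 : a*e*i - a*f*h - b*d*i + b*f*g + c*d*h - c*e*g = 1)
    (hδ2 : δ^2 ≤ 1/16) (hi34 : 3/4 ≤ i)
    (hc1 : c^2 ≤ δ^2) (hf1 : f^2 ≤ δ^2) (hg1 : g^2 ≤ δ^2) (hh1 : h^2 ≤ δ^2) :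
    a*e - b*d = i := by
  have hD2 : (a*e - b*d)^2 = i^2 := by
    have key : (a*e - b*d)^2 = (a^2+d^2)*(b^2+e^2) - (a*b+d*e)^2 := by ring
    have e1 : a^2+d^2 = 1 - g^2 := by linarith
    have e2 : b^2+e^2 = 1 - h^2 := by linarith
    have e3 : a*b+d*e = -(g*h) := by linarith
    rw [key, e1, e2, e3]
    linear_combination -r3
  have ha1 : a^2 ≤ 1 := by linarith [sq_nonneg d, sq_nonneg g]
  have hb1 : b^2 ≤ 1 := by linarith [sq_nonneg e, sq_nonneg h]
  have hd1 : d^2 ≤ 1 := by linarith [sq_nonneg a, sq_nonneg g]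
  have he1 : e^2 ≤ 1 := by linarith [sq_nonneg b, sq_nonneg h]
  have hiD : i * (a*e - b*d) ≥ 3/4 := by
    nlinarith [sq_nonneg (a*f + h), sq_nonneg (a*f - h),
      sq_nonneg (b*f + g), sq_nonneg (b*f - g),
      sq_nonneg (c*d + h), sq_nonneg (c*d - h),
      sq_nonneg (c*e + g), sq_nonneg (c*e - g),
      mul_nonneg (sub_nonneg.mpr ha1) (sq_nonneg f),
      mul_nonneg (sub_nonneg.mpr hb1) (sq_nonneg f),
      mul_nonneg (sub_nonneg.mpr hd1) (sq_nonneg c),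
      mul_nonneg (sub_nonneg.mpr he1) (sq_nonneg c)]
  have hDpos : 0 < a*e - b*d := by
    by_contra hcon
    push_neg at hcon
    nlinarith [mul_nonpos_of_nonneg_of_nonpos (by linarith : (0:ℝ) ≤ i) hcon]
  have hz : (a*e - b*d - i) * (a*e - b*d + i) = 0 := by linear_combination hD2
  rcases mul_eq_zero.mp hz with h' | h'
  · linarith
  · nlinarith

set_option maxHeartbeats 1000000 in
private lemma key_ineq_lemma (s h i δ : ℝ)
    (hsi2 : s^2 = h^2 + i^2) (hs34 : 3/4 ≤ s) (hs1 : s ≤ 1)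
    (hi34 : 3/4 ≤ i) (hh1 : h^2 ≤ δ^2) (h1s : 1 - s ≤ δ^2)
    (hδ2 : δ^2 ≤ 1/16) (hδ : 0 < δ) :
    s^2*((s-1)^2 + 2 - h^2) - 2*s*i ≤ 4*δ^2*s^2 := by
  have hsgei : i ≤ s := by nlinarith
  have hsmi : s - i ≤ (2/3)*h^2 := by nlinarith
  have h1 : s*(s-i) ≤ (2/3)*h^2 := by
    nlinarith [mul_nonneg (by linarith : (0:ℝ) ≤ 1 - s) (by linarith : (0:ℝ) ≤ s - i)]
  have h2 : (s-1)^2 ≤ δ^2*δ^2 := by nlinarith [sq_nonneg δ]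
  have h3 : s^2*(s-1)^2 ≤ δ^2*δ^2 := by
    nlinarith [mul_nonneg (by nlinarith : (0:ℝ) ≤ 1 - s^2) (sq_nonneg (s-1))]
  have h4 : δ^2 * (9/4) ≤ 4*δ^2*s^2 := by nlinarith [sq_nonneg δ]
  have h5 : 0 ≤ s^2*h^2 := mul_nonneg (sq_nonneg s) (sq_nonneg h)
  have h6 : δ^2*δ^2 ≤ (1/16)*δ^2 := by nlinarith [sq_nonneg δ]
  nlinarith [h1, h3, h4, h5, h6, hh1]

set_option maxHeartbeats 4000000 in
/-- if `R̂ ∈ SO(3)` satisfies `|(R̂ − Id)e₃| ≤ δ` with `δ` small, then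
`|(R̂ − Id)ᵀe₃| ≤ Cδ` and there is `Q̂ ∈ SO(2)` with `|R̂' − Q̂| ≤ Cδ`, for a universal
constant `C`. -/
theorem stmt12 :
    ∃ C > (0:ℝ), ∃ δ₀ > (0:ℝ), ∀ δ : ℝ, 0 < δ → δ ≤ δ₀ →
      ∀ R : Matrix (Fin 3) (Fin 3) ℝ, Rᵀ * R = 1 → R.det = 1 →
        enorm3 ((R - 1).mulVec e₃) ≤ δ →
        enorm3 ((R - 1)ᵀ.mulVec e₃) ≤ C * δ ∧
        ∃ Q : Matrix (Fin 2) (Fin 2) ℝ, Qᵀ * Q = 1 ∧ Q.det = 1 ∧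
          ‖R.submatrix Fin.castSucc Fin.castSucc - Q‖ ≤ C * δ := by
  refine ⟨2, by norm_num, 1/4, by norm_num, ?_⟩
  intro δ hδ hδ4 R hR hdet hclose
  have hRR : R * Rᵀ = 1 := mul_eq_one_comm.mp hR
  set a := R 0 0; set b := R 0 1; set c := R 0 2
  set d := R 1 0; set e := R 1 1; set f := R 1 2
  set g := R 2 0; set h := R 2 1; set i := R 2 2
  have c1 : a^2 + d^2 + g^2 = 1 := by
    have := congrFun (congrFun hR 0) 0
    simp [Matrix.mul_apply, Fin.sum_univ_three, Matrix.one_apply] at this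
    nlinarith [this]
  have c12 : a*b + d*e + g*h = 0 := by
    have := congrFun (congrFun hR 0) 1
    simp [Matrix.mul_apply, Fin.sum_univ_three, Matrix.one_apply] at this
    linarith [this]
  have c2 : b^2 + e^2 + h^2 = 1 := by
    have := congrFun (congrFun hR 1) 1
    simp [Matrix.mul_apply, Fin.sum_univ_three, Matrix.one_apply] at this
    nlinarith [this]
  have c3 : c^2 + f^2 + i^2 = 1 := by
    have := congrFun (congrFun hR 2) 2
    simp [Matrix.mul_apply, Fin.sum_univ_three, Matrix.one_apply] at this
    nlinarith [this]
  have r3 : g^2 + h^2 + i^2 = 1 := by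
    have := congrFun (congrFun hRR 2) 2
    simp [Matrix.mul_apply, Fin.sum_univ_three, Matrix.one_apply] at this
    nlinarith [this]
  -- hypothesis as squared bound
  have hclose' : Real.sqrt (c^2 + f^2 + (i-1)^2) ≤ δ := by
    have hE : enorm3 ((R - 1).mulVec e₃) = Real.sqrt (c^2 + f^2 + (i-1)^2) := by
      simp [enorm3, Matrix.mulVec, dotProduct, e₃, Fin.sum_univ_three,
        Matrix.sub_apply, Matrix.one_apply]
      rfl
    rwa [hE] at hclose
  have hsq : c^2 + f^2 + (i-1)^2 ≤ δ^2 := by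
    nlinarith [Real.sq_sqrt (show (0:ℝ) ≤ c^2 + f^2 + (i-1)^2 by positivity),
      Real.sqrt_nonneg (c^2 + f^2 + (i-1)^2), hclose']
  have hδ2 : δ^2 ≤ 1/16 := by nlinarith
  have hi34 : (3:ℝ)/4 ≤ i := by nlinarith [sq_nonneg (i - 1 + δ)]
  have hi1 : i ≤ 1 := by nlinarith [sq_nonneg c, sq_nonneg f, sq_nonneg (i-1)]
  have hgh : g^2 + h^2 ≤ δ^2 := by nlinarith [sq_nonneg (i-1)]
  have hc1 : c^2 ≤ δ^2 := by linarith [sq_nonneg f, sq_nonneg (i-1)]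
  have hf1 : f^2 ≤ δ^2 := by linarith [sq_nonneg c, sq_nonneg (i-1)]
  have hg1 : g^2 ≤ δ^2 := by linarith [sq_nonneg h]
  have hh1 : h^2 ≤ δ^2 := by linarith [sq_nonneg g]
  constructor
  · -- part 1
    have hE : enorm3 ((R - 1)ᵀ.mulVec e₃) = Real.sqrt (g^2 + h^2 + (i-1)^2) := by
      simp [enorm3, Matrix.mulVec, dotProduct, e₃, Fin.sum_univ_three,
        Matrix.sub_apply, Matrix.one_apply, Matrix.transpose_apply]
      rfl
    rw [hE]
    have h1 : g^2 + h^2 + (i-1)^2 = c^2 + f^2 + (i-1)^2 := by linarith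
    calc Real.sqrt (g^2 + h^2 + (i-1)^2) ≤ Real.sqrt (δ^2) := by
          apply Real.sqrt_le_sqrt; rw [h1]; exact hsq
      _ = δ := Real.sqrt_sq hδ.le
      _ ≤ 2 * δ := by linarith
  · -- part 2
    set s := Real.sqrt (a^2 + d^2) with hs_def
    have hs_sq : s^2 = a^2 + d^2 := Real.sq_sqrt (by positivity)
    have hs_sq' : s^2 = 1 - g^2 := by linarith
    have hs_nonneg : 0 ≤ s := Real.sqrt_nonneg _
    have hs34 : (3:ℝ)/4 ≤ s := by nlinarith
    have hs1 : s ≤ 1 := by nlinarith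
    have hs0 : s ≠ 0 := by positivity
    have hspos : 0 < s := by positivity
    refine ⟨!![a/s, -(d/s); d/s, a/s], so2_mem a d s hs0 hs_sq.symm,
      so2_det a d s hs0 hs_sq.symm, ?_⟩
    have hnorm : ‖R.submatrix Fin.castSucc Fin.castSucc - !![a/s, -(d/s); d/s, a/s]‖ =
        Real.sqrt ((a - a/s)^2 + (b - -(d/s))^2 + (d - d/s)^2 + (e - a/s)^2) := by
      rw [Matrix.frobenius_norm_def]
      simp [Fin.sum_univ_two, Real.sqrt_eq_rpow, Matrix.sub_apply, Matrix.submatrix_apply]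
      simp only [a, b, d, e]
      ring_nf
    rw [hnorm]
    -- determinant sign
    have hdet3 : a*e*i - a*f*h - b*d*i + b*f*g + c*d*h - c*e*g = 1 := by
      have := hdet
      rw [Matrix.det_fin_three] at this
      linarith [this]
    have hDi : a*e - b*d = i :=
      det_sign_lemma a b c d e f g h i δ c1 c12 c2 r3 hdet3 hδ2 hi34 hc1 hf1 hg1 hh1
    -- key inequality
    have hsi2 : s^2 = h^2 + i^2 := by linarith
    have h1s : 1 - s ≤ δ^2 := by nlinarith
    have hkey : s^2*((s-1)^2 + 2 - h^2) - 2*s*i ≤ 4*δ^2*s^2 :=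
      key_ineq_lemma s h i δ hsi2 hs34 hs1 hi34 hh1 h1s hδ2 hδ
    have hXeq : s^2*((a - a/s)^2 + (b - -(d/s))^2 + (d - d/s)^2 + (e - a/s)^2) =
        s^2*((s-1)^2 + 2 - h^2) - 2*s*i := by
      have e2 : b^2+e^2 = 1 - h^2 := by linarith
      field_simp
      linear_combination (s^2) * e2 + (-2 + 2*s - s^2) * hs_sq - 2*s*hDi
    have hXle : (a - a/s)^2 + (b - -(d/s))^2 + (d - d/s)^2 + (e - a/s)^2 ≤ 4*δ^2 := by
      have hs2pos : 0 < s^2 := by positivity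
      refine le_of_mul_le_mul_left ?_ hs2pos
      calc s^2*((a - a/s)^2 + (b - -(d/s))^2 + (d - d/s)^2 + (e - a/s)^2)
          = s^2*((s-1)^2 + 2 - h^2) - 2*s*i := hXeq
        _ ≤ 4*δ^2*s^2 := hkey
        _ = s^2*(4*δ^2) := by ring
    calc Real.sqrt ((a - a/s)^2 + (b - -(d/s))^2 + (d - d/s)^2 + (e - a/s)^2)
        ≤ Real.sqrt ((2*δ)^2) := by apply Real.sqrt_le_sqrt; linarith [hXle]
      _ = 2*δ := Real.sqrt_sq (by linarith)
end
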